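/- XOR discrepancy bound in the low-deficiency case: Let m ≥ 2 and let I be a nonempty finite index set. Let x (over [m]^I) and y (over ({0,1}^m)^I) be independent random variables such that Pr[x = a] ≤ 2 · m^(−0.9|I|) for every a ∈ [m]^I, and Pr[y = b] ≤ 2 · 2^(−|I|m) for every b ∈ ({0,1}^m)^I. Then |E[(−1)^(Σ_{i∈I} Ind_m(x_i, y_i))]| ≤ 2 · m^(−0.45|I|). -/

import Mathlib

open Finset

lemma sumA (m : ℕ) (u v : Fin m) :
    ∑ c : Fin m → Bool, ((-1:ℝ)^(if c u then 1 else 0)) * ((-1:ℝ)^(if c v then 1 else 0))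
      = if u = v then (2:ℝ)^m else 0 := by
  by_cases h : u = v
  · subst h
    rw [if_pos rfl]
    have h1 : ∀ c : Fin m → Bool,
        ((-1:ℝ)^(if c u then 1 else 0)) * ((-1:ℝ)^(if c u then 1 else 0)) = 1 := by
      intro c; by_cases hc : c u <;> simp [hc]
    rw [Finset.sum_congr rfl (fun c _ => h1 c)]
    simp [Finset.card_univ]
  · rw [if_neg h]
    apply Finset.sum_ninvolution (fun c => Function.update c u (!c u))
    · intro c
      have h1 : Function.update c u (!c u) u = !c u := Function.update_self _ _ _
      have h2 : Function.update c u (!c u) v = c v := Function.update_of_ne (by tauto) _ _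
      rw [h1, h2]
      by_cases hc : c u <;> by_cases hv : c v <;> simp [hc, hv]
    · intro c _
      intro hc
      have := congrFun hc u
      simp [Function.update_self] at this
    · intro c; exact Finset.mem_univ _
    · intro c
      funext j
      by_cases hj : j = u
      · subst hj; simp [Function.update_self]
      · simp [Function.update_of_ne hj]

lemma sumSq (m : ℕ) (I : Type) [Fintype I] [DecidableEq I] (px : (I → Fin m) → ℝ) :
    ∑ b : I → Fin m → Bool,
        (∑ a, px a * (-1:ℝ)^(∑ i, if b i (a i) then 1 else 0))^2
      = (2:ℝ)^(m * Fintype.card I) * ∑ a, (px a)^2 := by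
  have key : ∀ a a' : I → Fin m,
      ∑ b : I → Fin m → Bool,
        ((-1:ℝ)^(∑ i, if b i (a i) then 1 else 0)) *
        ((-1:ℝ)^(∑ i, if b i (a' i) then 1 else 0))
      = if a = a' then (2:ℝ)^(m * Fintype.card I) else 0 := by
    intro a a'
    have step : ∀ b : I → Fin m → Bool,
        ((-1:ℝ)^(∑ i, if b i (a i) then 1 else 0)) *
        ((-1:ℝ)^(∑ i, if b i (a' i) then 1 else 0))
        = ∏ i, (((-1:ℝ)^(if b i (a i) then 1 else 0)) *
            ((-1:ℝ)^(if b i (a' i) then 1 else 0))) := by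
      intro b
      rw [Finset.prod_mul_distrib, Finset.prod_pow_eq_pow_sum, Finset.prod_pow_eq_pow_sum]
    rw [Finset.sum_congr rfl (fun b _ => step b)]
    have := Finset.sum_prod_piFinset (ι := I) (R := ℝ)
      (Finset.univ : Finset (Fin m → Bool))
      (fun i c => ((-1:ℝ)^(if c (a i) then 1 else 0)) * ((-1:ℝ)^(if c (a' i) then 1 else 0)))
    rw [Fintype.piFinset_univ] at this
    rw [this]
    have : ∀ i : I, (∑ c : Fin m → Bool,
        ((-1:ℝ)^(if c (a i) then 1 else 0)) * ((-1:ℝ)^(if c (a' i) then 1 else 0)))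
        = if a i = a' i then (2:ℝ)^m else 0 := fun i => sumA m (a i) (a' i)
    rw [Finset.prod_congr rfl (fun i _ => this i)]
    by_cases h : a = a'
    · subst h
      simp [Finset.prod_const, Finset.card_univ, ← pow_mul]
    · obtain ⟨i, hi⟩ := Function.ne_iff.mp h
      rw [if_neg h]
      exact Finset.prod_eq_zero (Finset.mem_univ i) (if_neg hi)
  simp_rw [sq, Finset.sum_mul_sum]
  rw [Finset.sum_comm]
  have swap2 : ∀ a : I → Fin m,
      ∑ b : I → Fin m → Bool, ∑ a',
        (px a * (-1:ℝ)^(∑ i, if b i (a i) then 1 else 0)) *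
        (px a' * (-1:ℝ)^(∑ i, if b i (a' i) then 1 else 0))
      = px a * px a * (2:ℝ)^(m * Fintype.card I) := by
    intro a
    rw [Finset.sum_comm]
    have inner : ∀ a' : I → Fin m,
        ∑ b : I → Fin m → Bool,
          (px a * (-1:ℝ)^(∑ i, if b i (a i) then 1 else 0)) *
          (px a' * (-1:ℝ)^(∑ i, if b i (a' i) then 1 else 0))
        = px a * px a' * (if a = a' then (2:ℝ)^(m * Fintype.card I) else 0) := by
      intro a'
      rw [← key a a', Finset.mul_sum]
      apply Finset.sum_congr rfl
      intro b _
      ring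
    rw [Finset.sum_congr rfl (fun a' _ => inner a')]
    simp_rw [mul_ite, mul_zero]
    rw [Finset.sum_ite_eq univ a (fun a' => px a * px a' * (2:ℝ)^(m * Fintype.card I))]
    simp
  rw [Finset.sum_congr rfl (fun a _ => swap2 a), ← Finset.sum_mul, mul_comm]

/-- **XOR discrepancy bound in the low-deficiency case.** Let `m ≥ 2` and `I` a nonempty
finite index set. Let `x` (over `[m]^I`) and `y` (over `({0,1}^m)^I`) be independent
random variables (given by probability mass functions `px`, `py`) with
`Pr[x = a] ≤ 2·m^(−0.9|I|)` and `Pr[y = b] ≤ 2·2^(−|I|m)`. Then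
`|E[(−1)^(Σ_{i∈I} Ind_m(x_i,y_i))]| ≤ 2·m^(−0.45|I|)`. -/
theorem xor_discrepancy_low_deficiency (m : ℕ) (hm : 2 ≤ m)
    (I : Type) [Fintype I] [DecidableEq I] [Nonempty I]
    (px : (I → Fin m) → ℝ) (py : (I → Fin m → Bool) → ℝ)
    (hpx0 : ∀ a, 0 ≤ px a) (hpx1 : ∑ a, px a = 1)
    (hpy0 : ∀ b, 0 ≤ py b) (hpy1 : ∑ b, py b = 1)
    (hpx : ∀ a, px a ≤ 2 * (m : ℝ) ^ (-(0.9 * (Fintype.card I : ℝ))))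
    (hpy : ∀ b, py b ≤ 2 * (2 : ℝ) ^ (-((Fintype.card I : ℝ) * (m : ℝ)))) :
    |∑ a, ∑ b, px a * py b * (-1 : ℝ) ^ (∑ i, if b i (a i) then 1 else 0)| ≤
      2 * (m : ℝ) ^ (-(0.45 * (Fintype.card I : ℝ))) := by
  set c := Fintype.card I with hc
  have hmpos : (0:ℝ) < (m:ℝ) := by positivity
  set g : (I → Fin m → Bool) → ℝ :=
    fun b => ∑ a, px a * (-1:ℝ)^(∑ i, if b i (a i) then 1 else 0) with hg
  -- rewrite the double sum
  have hS : ∑ a, ∑ b, px a * py b * (-1 : ℝ) ^ (∑ i, if b i (a i) then 1 else 0)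
      = ∑ b, py b * g b := by
    rw [Finset.sum_comm]
    apply Finset.sum_congr rfl
    intro b _
    rw [hg, Finset.mul_sum]
    apply Finset.sum_congr rfl
    intro a _
    ring
  rw [hS]
  -- triangle inequality
  have h1 : |∑ b, py b * g b| ≤ ∑ b, py b * |g b| := by
    refine le_trans (Finset.abs_sum_le_sum_abs _ _) ?_
    apply Finset.sum_le_sum
    intro b _
    rw [abs_mul, abs_of_nonneg (hpy0 b)]
  -- Cauchy–Schwarz
  have h2 : (∑ b, py b * |g b|)^2 ≤ (∑ b, py b) * (∑ b, py b * (g b)^2) := by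
    have := Finset.sum_mul_sq_le_sq_mul_sq Finset.univ
      (fun b => Real.sqrt (py b)) (fun b => Real.sqrt (py b) * |g b|)
    calc (∑ b, py b * |g b|)^2
        = (∑ b, Real.sqrt (py b) * (Real.sqrt (py b) * |g b|))^2 := by
          congr 1
          apply Finset.sum_congr rfl
          intro b _
          rw [← mul_assoc, Real.mul_self_sqrt (hpy0 b)]
      _ ≤ (∑ b, Real.sqrt (py b)^2) * ∑ b, (Real.sqrt (py b) * |g b|)^2 := this
      _ = (∑ b, py b) * (∑ b, py b * (g b)^2) := by
          congr 1
          · exact Finset.sum_congr rfl fun b _ => Real.sq_sqrt (hpy0 b)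
          · apply Finset.sum_congr rfl
            intro b _
            rw [mul_pow, Real.sq_sqrt (hpy0 b), sq_abs]
  -- bound the weighted second moment
  have h3 : ∑ b, py b * (g b)^2
      ≤ (2 * (2:ℝ)^(-((c:ℝ) * (m:ℝ)))) * ∑ b, (g b)^2 := by
    rw [Finset.mul_sum]
    apply Finset.sum_le_sum
    intro b _
    exact mul_le_mul_of_nonneg_right (hpy b) (sq_nonneg _)
  have h4 : ∑ b, (g b)^2 = (2:ℝ)^(m * c) * ∑ a, (px a)^2 := sumSq m I px
  have h5 : ∑ a, (px a)^2 ≤ 2 * (m:ℝ)^(-(0.9 * (c:ℝ))) := by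
    calc ∑ a, (px a)^2 ≤ ∑ a, (2 * (m:ℝ)^(-(0.9 * (c:ℝ)))) * px a := by
          apply Finset.sum_le_sum
          intro a _
          rw [sq]
          exact mul_le_mul_of_nonneg_right (hpx a) (hpx0 a)
      _ = 2 * (m:ℝ)^(-(0.9 * (c:ℝ))) := by rw [← Finset.mul_sum, hpx1, mul_one]
  have hcancel : (2:ℝ)^(-((c:ℝ) * (m:ℝ))) * (2:ℝ)^(m * c) = 1 := by
    rw [← Real.rpow_natCast 2 (m * c), ← Real.rpow_add (by norm_num : (0:ℝ) < 2)]
    rw [show -((c:ℝ) * (m:ℝ)) + ((m * c : ℕ) : ℝ) = 0 by push_cast; ring]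
    exact Real.rpow_zero 2
  -- combine
  have hsq : (∑ b, py b * |g b|)^2 ≤ (2 * (m:ℝ)^(-(0.45 * (c:ℝ))))^2 := by
    have hR : (2 * (m:ℝ)^(-(0.45 * (c:ℝ))))^2 = 4 * (m:ℝ)^(-(0.9 * (c:ℝ))) := by
      have hh : ((m:ℝ)^(-(0.45 * (c:ℝ))))^2 = (m:ℝ)^(-(0.9 * (c:ℝ))) := by
        rw [sq, ← Real.rpow_add hmpos]
        rw [show -(0.45 * (c:ℝ)) + -(0.45 * (c:ℝ)) = -(0.9 * (c:ℝ)) by ring]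
      rw [mul_pow, hh]
      norm_num
    rw [hR]
    calc (∑ b, py b * |g b|)^2
        ≤ (∑ b, py b) * (∑ b, py b * (g b)^2) := h2
      _ = ∑ b, py b * (g b)^2 := by rw [hpy1, one_mul]
      _ ≤ (2 * (2:ℝ)^(-((c:ℝ) * (m:ℝ)))) * ((2:ℝ)^(m * c) * ∑ a, (px a)^2) := by
          rw [← h4]; exact h3
      _ = 2 * ((2:ℝ)^(-((c:ℝ) * (m:ℝ))) * (2:ℝ)^(m * c)) * ∑ a, (px a)^2 := by ring
      _ = 2 * ∑ a, (px a)^2 := by rw [hcancel]; ring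
      _ ≤ 2 * (2 * (m:ℝ)^(-(0.9 * (c:ℝ)))) := by linarith
      _ = 4 * (m:ℝ)^(-(0.9 * (c:ℝ))) := by ring
  have hRpos : (0:ℝ) ≤ 2 * (m:ℝ)^(-(0.45 * (c:ℝ))) := by positivity
  have hsum_nonneg : (0:ℝ) ≤ ∑ b, py b * |g b| := by
    apply Finset.sum_nonneg
    intro b _
    exact mul_nonneg (hpy0 b) (abs_nonneg _)
  nlinarith [h1, abs_nonneg (∑ b, py b * g b)]
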